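/- Let a₁ ∈ ℝ with a₁ ≠ 0, T > 0, and ω₁, φ₁ ∈ ℝ with sin(ω₁T) ≠ 0; set θ_n = ω₁Tn + φ₁. Then lim_{N→∞} (1/N³) Σ_{n=1}^{N−1} (a₁T((n+1)cos θ_{n+1} − n cos θ_n))² = a₁²T²(1 − cos(ω₁T))/3. -/

import Mathlib

open Filter

private lemma tel_sum (G : ℕ → ℝ) (m : ℕ) :
    ∑ n ∈ Finset.Icc 1 m, (G (n+1) - G n) = G (m+1) - G 1 := by
  induction m with
  | zero => simp
  | succ k ih =>
    rw [Finset.sum_Icc_succ_top (by omega), ih]; ring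

private lemma sq_sum (m : ℕ) :
    ∑ n ∈ Finset.Icc 1 m, (n:ℝ)^2 = m*(m+1)*(2*m+1)/6 := by
  induction m with
  | zero => simp
  | succ k ih =>
    rw [Finset.sum_Icc_succ_top (by omega), ih]; push_cast; ring

private lemma trig1 (θ c : ℝ) :
    (Real.cos (θ + c) - Real.cos θ)^2 = (1 - Real.cos c)*(1 - Real.cos (2*θ + c)) := by
  rw [Real.cos_sub_cos]
  have h1 : (θ + c + θ)/2 = θ + c/2 := by ring
  have h2 : (θ + c - θ)/2 = c/2 := by ring
  rw [h1, h2]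
  have e1 : Real.sin (θ + c/2)^2 = 1/2 - Real.cos (2*θ + c)/2 := by
    rw [Real.sin_sq_eq_half_sub]; ring_nf
  have e2 : Real.sin (c/2)^2 = 1/2 - Real.cos c/2 := by
    rw [Real.sin_sq_eq_half_sub]; ring_nf
  nlinarith [e1, e2]

private lemma trig2 (θ c : ℝ) :
    Real.sin (2*(θ+c)) - Real.sin (2*θ) = 2 * Real.sin c * Real.cos (2*θ + c) := by
  rw [Real.sin_sub_sin]
  have h1 : (2*(θ+c) - 2*θ)/2 = c := by ring
  have h2 : (2*(θ+c) + 2*θ)/2 = 2*θ + c := by ring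
  rw [h1, h2]

private lemma pointwise (a t c φ D : ℝ) (hD : 2*Real.sin c*D = a^2*t^2*(1-Real.cos c)) (x : ℝ) :
    (a*t*((x+1)*Real.cos (c*(x+1)+φ) - x*Real.cos (c*x+φ)))^2
    = a^2*t^2*(1-Real.cos c)*x^2
      - D*((x+1)^2*Real.sin (2*(c*(x+1)+φ)) - x^2*Real.sin (2*(c*x+φ)))
      + (D*(2*x+1)*Real.sin (2*(c*(x+1)+φ))
         + a^2*t^2*(2*x*(Real.cos (c*(x+1)+φ) - Real.cos (c*x+φ))*Real.cos (c*(x+1)+φ)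
            + Real.cos (c*(x+1)+φ)^2)) := by
  have hθ : c*(x+1)+φ = (c*x+φ) + c := by ring
  rw [hθ]
  have h1 := trig1 (c*x+φ) c
  have h2 := trig2 (c*x+φ) c
  linear_combination a^2*t^2*x^2 * h1 + D*x^2 * h2 + x^2*Real.cos (2*(c*x+φ)+c) * hD

noncomputable def ggAux (c φ : ℝ) (n : ℕ) : ℝ := Real.sin (2*(c*(n:ℝ)+φ))

noncomputable def GGAux (c φ : ℝ) (n : ℕ) : ℝ := (n:ℝ)^2 * ggAux c φ n

noncomputable def rrAux (a t c φ D : ℝ) (n : ℕ) : ℝ :=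
  D*(2*(n:ℝ)+1)*ggAux c φ (n+1)
    + a^2*t^2*(2*(n:ℝ)*(Real.cos (c*((n:ℝ)+1)+φ) - Real.cos (c*(n:ℝ)+φ))*Real.cos (c*((n:ℝ)+1)+φ)
        + Real.cos (c*((n:ℝ)+1)+φ)^2)

private lemma pointwise' (a t c φ D : ℝ) (hD : 2*Real.sin c*D = a^2*t^2*(1-Real.cos c)) (n : ℕ) :
    (a*t*(((n:ℝ)+1)*Real.cos (c*((n:ℝ)+1)+φ) - (n:ℝ)*Real.cos (c*(n:ℝ)+φ)))^2
    = a^2*t^2*(1-Real.cos c)*(n:ℝ)^2 - D*(GGAux c φ (n+1) - GGAux c φ n) + rrAux a t c φ D n := by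
  have h := pointwise a t c φ D hD (n:ℝ)
  simp only [GGAux, ggAux, rrAux]
  push_cast
  exact h

private lemma rr_bound (a t c φ D : ℝ) (n : ℕ) :
    |rrAux a t c φ D n| ≤ (2*|D| + 4*a^2*t^2)*((n:ℝ)+1) := by
  have hn : (0:ℝ) ≤ (n:ℝ) := Nat.cast_nonneg n
  have hg : |ggAux c φ (n+1)| ≤ 1 := Real.abs_sin_le_one _
  have hc1 : |Real.cos (c*((n:ℝ)+1)+φ)| ≤ 1 := Real.abs_cos_le_one _
  have hc0 : |Real.cos (c*(n:ℝ)+φ)| ≤ 1 := Real.abs_cos_le_one _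
  calc |rrAux a t c φ D n|
      ≤ |D*(2*(n:ℝ)+1)*ggAux c φ (n+1)|
        + |a^2*t^2*(2*(n:ℝ)*(Real.cos (c*((n:ℝ)+1)+φ) - Real.cos (c*(n:ℝ)+φ))*Real.cos (c*((n:ℝ)+1)+φ)
            + Real.cos (c*((n:ℝ)+1)+φ)^2)| := abs_add_le _ _
    _ ≤ |D| *(2*(n:ℝ)+1) + a^2*t^2*(4*(n:ℝ)+1) := by
        have habs2 : |Real.cos (c*((n:ℝ)+1)+φ) - Real.cos (c*(n:ℝ)+φ)| ≤ 2 := by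
          calc |Real.cos (c*((n:ℝ)+1)+φ) - Real.cos (c*(n:ℝ)+φ)|
              ≤ |Real.cos (c*((n:ℝ)+1)+φ)| + |Real.cos (c*(n:ℝ)+φ)| := abs_sub _ _
            _ ≤ 2 := by linarith
        have e1 : |D*(2*(n:ℝ)+1)*ggAux c φ (n+1)| ≤ |D| *(2*(n:ℝ)+1) := by
          rw [abs_mul, abs_mul, abs_of_nonneg (by positivity : (0:ℝ) ≤ 2*(n:ℝ)+1)]
          exact mul_le_of_le_one_right (by positivity) hg
        have e2 : |a^2*t^2*(2*(n:ℝ)*(Real.cos (c*((n:ℝ)+1)+φ) - Real.cos (c*(n:ℝ)+φ))*Real.cos (c*((n:ℝ)+1)+φ)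
            + Real.cos (c*((n:ℝ)+1)+φ)^2)| ≤ a^2*t^2*(4*(n:ℝ)+1) := by
          rw [abs_mul]
          rw [abs_of_nonneg (by positivity : (0:ℝ) ≤ a^2*t^2)]
          have hX : |2*(n:ℝ)*(Real.cos (c*((n:ℝ)+1)+φ) - Real.cos (c*(n:ℝ)+φ))*Real.cos (c*((n:ℝ)+1)+φ)
              + Real.cos (c*((n:ℝ)+1)+φ)^2| ≤ 4*(n:ℝ)+1 := by
            calc |2*(n:ℝ)*(Real.cos (c*((n:ℝ)+1)+φ) - Real.cos (c*(n:ℝ)+φ))*Real.cos (c*((n:ℝ)+1)+φ)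
                + Real.cos (c*((n:ℝ)+1)+φ)^2|
                ≤ |2*(n:ℝ)*(Real.cos (c*((n:ℝ)+1)+φ) - Real.cos (c*(n:ℝ)+φ))*Real.cos (c*((n:ℝ)+1)+φ)|
                  + |Real.cos (c*((n:ℝ)+1)+φ)^2| := abs_add_le _ _
              _ ≤ 4*(n:ℝ)+1 := by
                  rw [abs_mul, abs_mul, abs_of_nonneg (by positivity : (0:ℝ) ≤ 2*(n:ℝ)), abs_pow]
                  have h1 : 2*(n:ℝ) * |Real.cos (c*((n:ℝ)+1)+φ) - Real.cos (c*(n:ℝ)+φ)|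
                      * |Real.cos (c*((n:ℝ)+1)+φ)| ≤ 2*(n:ℝ) * 2 * 1 := by
                    gcongr
                  have h2 : |Real.cos (c*((n:ℝ)+1)+φ)|^2 ≤ 1 := by
                    nlinarith [abs_nonneg (Real.cos (c*((n:ℝ)+1)+φ))]
                  linarith
          exact mul_le_mul_of_nonneg_left hX (by positivity)
        exact add_le_add e1 e2
    _ ≤ (2*|D| + 4*a^2*t^2)*((n:ℝ)+1) := by nlinarith [abs_nonneg D, sq_nonneg (a*t), sq_nonneg a, sq_nonneg t, mul_nonneg (sq_nonneg a) (sq_nonneg t)]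

noncomputable def FsumAux (a t c φ : ℝ) (N : ℕ) : ℝ :=
  ∑ n ∈ Finset.Icc 1 (N-1),
    (a * t * (((n:ℝ) + 1) * Real.cos (c * ((n:ℝ) + 1) + φ) - (n:ℝ) * Real.cos (c * (n:ℝ) + φ)))^2

noncomputable def SsumAux (N : ℕ) : ℝ := ∑ n ∈ Finset.Icc 1 (N-1), (n:ℝ)^2

private lemma Ssum_eq (N : ℕ) (hN : 1 ≤ N) :
    SsumAux N = ((N:ℝ)-1)*(N:ℝ)*(2*(N:ℝ)-1)/6 := by
  rw [SsumAux, sq_sum, Nat.cast_sub hN, Nat.cast_one]; ring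

private lemma Fsum_eq (a t c φ D : ℝ) (hD : 2*Real.sin c*D = a^2*t^2*(1-Real.cos c))
    (N : ℕ) (hN : 1 ≤ N) :
    FsumAux a t c φ N = a^2*t^2*(1-Real.cos c) * SsumAux N
      - D*(GGAux c φ N - GGAux c φ 1) + ∑ n ∈ Finset.Icc 1 (N-1), rrAux a t c φ D n := by
  have h1 : FsumAux a t c φ N = ∑ n ∈ Finset.Icc 1 (N-1),
      (a^2*t^2*(1-Real.cos c)*(n:ℝ)^2 - D*(GGAux c φ (n+1) - GGAux c φ n) + rrAux a t c φ D n) := by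
    rw [FsumAux]
    exact Finset.sum_congr rfl (fun n _ => pointwise' a t c φ D hD n)
  rw [h1, Finset.sum_add_distrib, Finset.sum_sub_distrib, ← Finset.mul_sum, ← Finset.mul_sum,
    tel_sum (GGAux c φ) (N-1)]
  have h2 : N - 1 + 1 = N := by omega
  rw [h2, SsumAux]

private lemma GG_bound (c φ : ℝ) (N : ℕ) : |GGAux c φ N| ≤ (N:ℝ)^2 := by
  simp only [GGAux, ggAux]
  rw [abs_mul, abs_of_nonneg (by positivity : (0:ℝ) ≤ (N:ℝ)^2)]
  exact mul_le_of_le_one_right (by positivity) (Real.abs_sin_le_one _)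

private lemma Fsum_bound (a t c φ D : ℝ) (hD : 2*Real.sin c*D = a^2*t^2*(1-Real.cos c))
    (N : ℕ) (hN : 1 ≤ N) :
    |FsumAux a t c φ N - a^2*t^2*(1-Real.cos c) * SsumAux N|
      ≤ (4*|D| + 4*a^2*t^2) * (N:ℝ)^2 := by
  have hN1 : (1:ℝ) ≤ (N:ℝ) := by exact_mod_cast hN
  have hkey : FsumAux a t c φ N - a^2*t^2*(1-Real.cos c) * SsumAux N
      = -(D*(GGAux c φ N - GGAux c φ 1)) + ∑ n ∈ Finset.Icc 1 (N-1), rrAux a t c φ D n := by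
    rw [Fsum_eq a t c φ D hD N hN]; ring
  rw [hkey]
  have hG : |D*(GGAux c φ N - GGAux c φ 1)| ≤ |D| * ((N:ℝ)^2 + 1) := by
    rw [abs_mul]
    have h1 : |GGAux c φ N - GGAux c φ 1| ≤ (N:ℝ)^2 + 1 := by
      calc |GGAux c φ N - GGAux c φ 1| ≤ |GGAux c φ N| + |GGAux c φ 1| := abs_sub _ _
        _ ≤ (N:ℝ)^2 + 1 := by
            have := GG_bound c φ N
            have h2 := GG_bound c φ 1
            norm_num at h2
            linarith
    exact mul_le_mul_of_nonneg_left h1 (abs_nonneg D)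
  have hR : |∑ n ∈ Finset.Icc 1 (N-1), rrAux a t c φ D n|
      ≤ (2*|D| + 4*a^2*t^2) * (N:ℝ)^2 := by
    calc |∑ n ∈ Finset.Icc 1 (N-1), rrAux a t c φ D n|
        ≤ ∑ n ∈ Finset.Icc 1 (N-1), |rrAux a t c φ D n| := Finset.abs_sum_le_sum_abs _ _
      _ ≤ ∑ n ∈ Finset.Icc 1 (N-1), (2*|D| + 4*a^2*t^2) * (N:ℝ) := by
          refine Finset.sum_le_sum (fun n hn => ?_)
          refine (rr_bound a t c φ D n).trans ?_
          have hn' : n + 1 ≤ N := by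
            have := (Finset.mem_Icc.mp hn).2; omega
          have hcast : (n:ℝ) + 1 ≤ (N:ℝ) := by exact_mod_cast hn'
          have hB : (0:ℝ) ≤ 2*|D| + 4*a^2*t^2 := by positivity
          exact mul_le_mul_of_nonneg_left hcast hB
      _ = ((N-1 : ℕ) : ℝ) * ((2*|D| + 4*a^2*t^2) * (N:ℝ)) := by
          rw [Finset.sum_const, Nat.card_Icc, nsmul_eq_mul]
          norm_num
      _ ≤ (N:ℝ) * ((2*|D| + 4*a^2*t^2) * (N:ℝ)) := by
          have h3 : ((N-1 : ℕ) : ℝ) ≤ (N:ℝ) := by exact_mod_cast Nat.sub_le N 1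
          exact mul_le_mul_of_nonneg_right h3 (by positivity)
      _ = (2*|D| + 4*a^2*t^2) * (N:ℝ)^2 := by ring
  calc |-(D*(GGAux c φ N - GGAux c φ 1)) + ∑ n ∈ Finset.Icc 1 (N-1), rrAux a t c φ D n|
      ≤ |-(D*(GGAux c φ N - GGAux c φ 1))| + |∑ n ∈ Finset.Icc 1 (N-1), rrAux a t c φ D n| :=
        abs_add_le _ _
    _ ≤ |D| * ((N:ℝ)^2 + 1) + (2*|D| + 4*a^2*t^2) * (N:ℝ)^2 := by
        rw [abs_neg]; exact add_le_add hG hR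
    _ ≤ (4*|D| + 4*a^2*t^2) * (N:ℝ)^2 := by nlinarith [abs_nonneg D, sq_nonneg ((N:ℝ)-1)]

theorem fisher_entry_22_asymptotics
    (a₁ T ω₁ φ₁ : ℝ) (ha : a₁ ≠ 0) (hT : 0 < T) (hs : Real.sin (ω₁ * T) ≠ 0) :
    Tendsto (fun N : ℕ =>
        (1 / (N : ℝ) ^ 3) *
          ∑ n ∈ Finset.Icc 1 (N - 1),
            (a₁ * T * ((n + 1) * Real.cos (ω₁ * T * (n + 1) + φ₁)
              - n * Real.cos (ω₁ * T * n + φ₁))) ^ 2)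
      atTop (nhds (a₁ ^ 2 * T ^ 2 * (1 - Real.cos (ω₁ * T)) / 3)) := by
  have hgoal : (fun N : ℕ =>
        (1 / (N : ℝ) ^ 3) *
          ∑ n ∈ Finset.Icc 1 (N - 1),
            (a₁ * T * ((n + 1) * Real.cos (ω₁ * T * (n + 1) + φ₁)
              - n * Real.cos (ω₁ * T * n + φ₁))) ^ 2)
      = fun N : ℕ => (1 / (N:ℝ)^3) * FsumAux a₁ T (ω₁*T) φ₁ N := by
    funext N
    rw [FsumAux]
  rw [hgoal]
  set L : ℝ := a₁^2*T^2*(1-Real.cos (ω₁*T)) with hL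
  set D : ℝ := L / (2*Real.sin (ω₁*T)) with hDdef
  have hD : 2*Real.sin (ω₁*T)*D = a₁^2*T^2*(1-Real.cos (ω₁*T)) := by
    rw [hDdef, hL]; field_simp
  -- main part tendsto
  have h0 : Tendsto (fun N : ℕ => 1/(N:ℝ)) atTop (nhds 0) :=
    tendsto_one_div_atTop_nhds_zero_nat
  have hmain : Tendsto (fun N : ℕ => L * SsumAux N / (N:ℝ)^3) atTop (nhds (L/3)) := by
    have hlim : Tendsto (fun N : ℕ => L/6 * (1 - 1/(N:ℝ)) * (2 - 1/(N:ℝ))) atTop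
        (nhds (L/6 * (1 - 0) * (2 - 0))) :=
      (((tendsto_const_nhds.sub h0).const_mul (L/6)).mul (tendsto_const_nhds.sub h0))
    have hval : L/6 * (1 - 0) * (2 - 0) = L/3 := by ring
    rw [hval] at hlim
    refine hlim.congr' ?_
    filter_upwards [eventually_ge_atTop 1] with N hN
    have hN0 : (0:ℝ) < (N:ℝ) := by exact_mod_cast hN
    rw [Ssum_eq N hN]
    field_simp
  have herr : Tendsto (fun N : ℕ =>
      (FsumAux a₁ T (ω₁*T) φ₁ N - L * SsumAux N) / (N:ℝ)^3) atTop (nhds 0) := by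
    refine squeeze_zero_norm' ?_ (tendsto_const_div_atTop_nhds_zero_nat (4*|D| + 4*a₁^2*T^2))
    filter_upwards [eventually_ge_atTop 1] with N hN
    have hN0 : (0:ℝ) < (N:ℝ) := by exact_mod_cast hN
    have hb := Fsum_bound a₁ T (ω₁*T) φ₁ D hD N hN
    rw [← hL] at hb
    have h1 : ‖(FsumAux a₁ T (ω₁*T) φ₁ N - L * SsumAux N) / (N:ℝ)^3‖
        = |FsumAux a₁ T (ω₁*T) φ₁ N - L * SsumAux N| / (N:ℝ)^3 := by
      rw [Real.norm_eq_abs, abs_div, abs_of_nonneg (by positivity : (0:ℝ) ≤ (N:ℝ)^3)]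
    rw [h1]
    have h2 : |FsumAux a₁ T (ω₁*T) φ₁ N - L * SsumAux N| / (N:ℝ)^3
        ≤ ((4*|D| + 4*a₁^2*T^2) * (N:ℝ)^2) / (N:ℝ)^3 := by gcongr
    have h3 : ((4*|D| + 4*a₁^2*T^2) * (N:ℝ)^2) / (N:ℝ)^3 = (4*|D| + 4*a₁^2*T^2) / (N:ℝ) := by
      field_simp
    exact h2.trans h3.le
  have hsum := hmain.add herr
  rw [add_zero] at hsum
  refine hsum.congr ?_
  intro N
  rw [← add_div]
  ring
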